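/- Let G be a 2-connected graph in which x, y are adjacent vertices such that G − {x,y} has exactly 2 components, and suppose {x,y} is not an admissible 2-cut. Then G is isomorphic to K_4 minus an edge. -/

import Mathlib

open SimpleGraph

/-- `G` is a 2-sum of `G₁` and `G₂` with joins `j₁, j₂`.  Here `zᵢ` is a vertex of
`Gᵢ` of degree two with distinct neighbors `xᵢ, yᵢ`; the graphs `Gᵢ - zᵢ` (with the
edge `xᵢyᵢ` removed if present) are glued into `G` along `x₁ = x₂ = j₁` and
`y₁ = y₂ = j₂`, and the edge `j₁j₂` is present in `G` iff `xᵢyᵢ ∈ E(Gᵢ)` for some `i`. -/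
def IsTwoSumOf {V V₁ V₂ : Type*} (G : SimpleGraph V) (G₁ : SimpleGraph V₁)
    (G₂ : SimpleGraph V₂) (j₁ j₂ : V) : Prop :=
  ∃ (z₁ x₁ y₁ : V₁) (z₂ x₂ y₂ : V₂) (f₁ : V₁ → V) (f₂ : V₂ → V),
    x₁ ≠ y₁ ∧ x₂ ≠ y₂ ∧
    (∀ u, G₁.Adj z₁ u ↔ u = x₁ ∨ u = y₁) ∧
    (∀ u, G₂.Adj z₂ u ↔ u = x₂ ∨ u = y₂) ∧
    Set.InjOn f₁ {v | v ≠ z₁} ∧ Set.InjOn f₂ {v | v ≠ z₂} ∧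
    f₁ x₁ = j₁ ∧ f₁ y₁ = j₂ ∧ f₂ x₂ = j₁ ∧ f₂ y₂ = j₂ ∧
    (∀ v : V, v ∈ f₁ '' {u | u ≠ z₁} ∪ f₂ '' {u | u ≠ z₂}) ∧
    (f₁ '' {u | u ≠ z₁}) ∩ (f₂ '' {u | u ≠ z₂}) = {j₁, j₂} ∧
    (∀ u v, u ≠ z₁ → v ≠ z₁ → s(u, v) ≠ s(x₁, y₁) →
      (G.Adj (f₁ u) (f₁ v) ↔ G₁.Adj u v)) ∧
    (∀ u v, u ≠ z₂ → v ≠ z₂ → s(u, v) ≠ s(x₂, y₂) →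
      (G.Adj (f₂ u) (f₂ v) ↔ G₂.Adj u v)) ∧
    (G.Adj j₁ j₂ ↔ (G₁.Adj x₁ y₁ ∨ G₂.Adj x₂ y₂)) ∧
    (∀ a b, G.Adj a b →
      (a ∈ f₁ '' {u | u ≠ z₁} ∧ b ∈ f₁ '' {u | u ≠ z₁}) ∨
      (a ∈ f₂ '' {u | u ≠ z₂} ∧ b ∈ f₂ '' {u | u ≠ z₂}))

/-- `{x, y}` is an admissible 2-cut of `G`: `G` can be expressed as a 2-sum of two
graphs, each having fewer edges than `G`, with `{x, y}` the set of joins. -/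
def AdmissibleTwoCut {V : Type*} (G : SimpleGraph V) (x y : V) : Prop :=
  ∃ (n₁ n₂ : ℕ) (G₁ : SimpleGraph (Fin n₁)) (G₂ : SimpleGraph (Fin n₂)),
    IsTwoSumOf G G₁ G₂ x y ∧
    G₁.edgeSet.ncard < G.edgeSet.ncard ∧ G₂.edgeSet.ncard < G.edgeSet.ncard

/-- `G` is 2-connected: at least 3 vertices, and deleting any single vertex
leaves a connected graph. -/
def TwoConnected {V : Type*} [Fintype V] (G : SimpleGraph V) : Prop :=
  3 ≤ Fintype.card V ∧ ∀ v : V, (G.induce {u | u ≠ v}).Connected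

variable {V : Type}

/-- auxiliary side graph of 2-sum construction -/
def sideG (G' : SimpleGraph V) (U : Set V) (x y : V) : SimpleGraph (Option ↥U) where
  Adj a b := match a, b with
    | some u, some v => G'.Adj ↑u ↑v
    | some u, none => (u : V) = x ∨ (u : V) = y
    | none, some v => (v : V) = x ∨ (v : V) = y
    | none, none => False
  symm := ⟨by rintro (_ | u) (_ | v) h <;> simp_all <;> exact h.symm⟩
  loopless := ⟨by rintro (_ | u) h <;> simp_all <;> exact G'.irrefl h⟩

lemma sideG_adj_some {G' : SimpleGraph V} {U : Set V} {x y : V} {u v : ↥U} :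
    (sideG G' U x y).Adj (some u) (some v) ↔ G'.Adj ↑u ↑v := Iff.rfl

lemma sideG_adj_none {G' : SimpleGraph V} {U : Set V} {x y : V} {v : ↥U} :
    (sideG G' U x y).Adj none (some v) ↔ (v : V) = x ∨ (v : V) = y := Iff.rfl

lemma sideG_edgeSet (G' : SimpleGraph V) (U : Set V) {x y : V} (hx : x ∈ U) (hy : y ∈ U) :
    (sideG G' U x y).edgeSet =
      Sym2.map some '' (G'.induce U).edgeSet ∪
        {s(none, some ⟨x, hx⟩), s(none, some ⟨y, hy⟩)} := by
  ext e
  induction e using Sym2.ind with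
  | _ a b =>
    cases a with
    | none =>
      cases b with
      | none =>
        simp only [mem_edgeSet, Set.mem_union, Set.mem_insert_iff, Set.mem_singleton_iff,
          Sym2.eq_iff]
        show False ↔ _
        rw [false_iff]
        rintro (⟨e', he', h⟩ | h | h)
        · induction e' using Sym2.ind with
          | _ p q => rw [Sym2.map_pair_eq, Sym2.eq_iff] at h; simp_all
        · simp_all
        · simp_all
      | some v =>
        simp only [mem_edgeSet, Set.mem_union, Set.mem_insert_iff, Set.mem_singleton_iff,
          sideG_adj_none, Sym2.eq_iff]
        constructor
        · rintro (h | h)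
          · right; left; left; exact ⟨trivial, congrArg some (Subtype.ext h)⟩
          · right; right; left; exact ⟨trivial, congrArg some (Subtype.ext h)⟩
        · rintro (⟨e', he', h⟩ | h | h)
          · exfalso; induction e' using Sym2.ind with
            | _ p q => rw [Sym2.map_pair_eq, Sym2.eq_iff] at h; simp_all
          · rcases h with ⟨h1, h2⟩ | ⟨h1, h2⟩ <;> simp_all
          · rcases h with ⟨h1, h2⟩ | ⟨h1, h2⟩ <;> simp_all
    | some u =>
      cases b with
      | none =>
        simp only [mem_edgeSet, Set.mem_union, Set.mem_insert_iff, Set.mem_singleton_iff,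
          Sym2.eq_iff]
        show ((u : V) = x ∨ (u : V) = y) ↔ _
        constructor
        · rintro (h | h)
          · right; left; right; exact ⟨congrArg some (Subtype.ext h), trivial⟩
          · right; right; right; exact ⟨congrArg some (Subtype.ext h), trivial⟩
        · rintro (⟨e', he', h⟩ | h | h)
          · exfalso; induction e' using Sym2.ind with
            | _ p q => rw [Sym2.map_pair_eq, Sym2.eq_iff] at h; simp_all
          · rcases h with ⟨h1, h2⟩ | ⟨h1, h2⟩ <;> simp_all
          · rcases h with ⟨h1, h2⟩ | ⟨h1, h2⟩ <;> simp_all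
      | some v =>
        simp only [mem_edgeSet, Set.mem_union, Set.mem_insert_iff, Set.mem_singleton_iff,
          sideG_adj_some, Sym2.eq_iff]
        constructor
        · intro h
          left
          exact ⟨s(u, v), h, by rw [Sym2.map_pair_eq]⟩
        · rintro (⟨e', he', h⟩ | h | h)
          · induction e' using Sym2.ind with
            | _ p q =>
              rw [Sym2.map_pair_eq, Sym2.eq_iff] at h
              rcases h with ⟨h1, h2⟩ | ⟨h1, h2⟩
              · simp only [Option.some.injEq] at h1 h2; subst h1; subst h2; exact he'
              · simp only [Option.some.injEq] at h1 h2; subst h1; subst h2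
                exact ((mem_edgeSet _).mp he').symm
          · simp_all
          · simp_all
lemma induce_edgeSet_image (G' : SimpleGraph V) (U : Set V) :
    Sym2.map (Subtype.val) '' (G'.induce U).edgeSet
      = {e ∈ G'.edgeSet | ∀ v ∈ e, v ∈ U} := by
  ext e
  constructor
  · rintro ⟨e', he', rfl⟩
    induction e' using Sym2.ind with
    | _ p q =>
      rw [Sym2.map_pair_eq]
      refine ⟨he', ?_⟩
      intro v hv
      rw [Sym2.mem_iff] at hv
      rcases hv with rfl | rfl
      · exact p.2
      · exact q.2
  · intro ⟨he, hU⟩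
    induction e using Sym2.ind with
    | _ a b =>
      refine ⟨s(⟨a, hU a (by simp)⟩, ⟨b, hU b (by simp)⟩), he, ?_⟩
      rw [Sym2.map_pair_eq]

lemma induce_edgeSet_ncard (G' : SimpleGraph V) (U : Set V) :
    (G'.induce U).edgeSet.ncard = {e ∈ G'.edgeSet | ∀ v ∈ e, v ∈ U}.ncard := by
  rw [← induce_edgeSet_image]
  exact (Set.ncard_image_of_injective _ (Sym2.map.injective Subtype.coe_injective)).symm
lemma sideG_ncard [Finite V] (G' : SimpleGraph V) (U : Set V) {x y : V}
    (hx : x ∈ U) (hy : y ∈ U) (hxy : x ≠ y) :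
    (sideG G' U x y).edgeSet.ncard = (G'.induce U).edgeSet.ncard + 2 := by
  rw [sideG_edgeSet G' U hx hy]
  rw [Set.ncard_union_eq ?disj (Set.toFinite _) (Set.toFinite _)]
  · rw [Set.ncard_image_of_injective _ (Sym2.map.injective (Option.some_injective _)),
      Set.ncard_pair]
    intro h
    rw [Sym2.eq_iff] at h
    simp [Subtype.ext_iff, hxy] at h
  case disj =>
    rw [Set.disjoint_left]
    rintro e ⟨e', he', rfl⟩ h
    induction e' using Sym2.ind with
    | _ p q =>
      rw [Sym2.map_pair_eq] at h
      simp only [Set.mem_insert_iff, Set.mem_singleton_iff, Sym2.eq_iff] at h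
      simp_all
lemma IsTwoSumOf.swap {V V₁ V₂ : Type*} {G : SimpleGraph V} {G₁ : SimpleGraph V₁}
    {G₂ : SimpleGraph V₂} {j₁ j₂ : V} (h : IsTwoSumOf G G₁ G₂ j₁ j₂) :
    IsTwoSumOf G G₂ G₁ j₁ j₂ := by
  obtain ⟨z₁, x₁, y₁, z₂, x₂, y₂, f₁, f₂, h1, h2, h3, h4, h5, h6, h7, h8, h9, h10,
    h11, h12, h13, h14, h15, h16⟩ := h
  refine ⟨z₂, x₂, y₂, z₁, x₁, y₁, f₂, f₁, h2, h1, h4, h3, h6, h5, h9, h10, h7, h8,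
    ?_, ?_, h14, h13, ?_, ?_⟩
  · intro v; rw [Set.union_comm]; exact h11 v
  · rw [Set.inter_comm]; exact h12
  · rw [h15]; exact or_comm
  · intro a b hab; exact (h16 a b hab).symm

lemma IsTwoSumOf.comap_left {V V₁ V₂ W₁ : Type*} {G : SimpleGraph V} {G₁ : SimpleGraph V₁}
    {G₂ : SimpleGraph V₂} {j₁ j₂ : V} (e : W₁ ≃ V₁) (h : IsTwoSumOf G G₁ G₂ j₁ j₂) :
    IsTwoSumOf G (G₁.comap e) G₂ j₁ j₂ := by
  obtain ⟨z₁, x₁, y₁, z₂, x₂, y₂, f₁, f₂, h1, h2, h3, h4, h5, h6, h7, h8, h9, h10,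
    h11, h12, h13, h14, h15, h16⟩ := h
  have hset : ⇑e '' {u | u ≠ e.symm z₁} = {u | u ≠ z₁} := by
    ext v
    constructor
    · rintro ⟨u, hu, rfl⟩
      exact fun hv => hu (by rw [← hv, Equiv.symm_apply_apply])
    · intro hv
      exact ⟨e.symm v, fun hc => hv (by simpa using congrArg e hc),
        Equiv.apply_symm_apply e v⟩
  have himg : (f₁ ∘ e) '' {u | u ≠ e.symm z₁} = f₁ '' {u | u ≠ z₁} := by
    rw [Set.image_comp, hset]
  refine ⟨e.symm z₁, e.symm x₁, e.symm y₁, z₂, x₂, y₂, f₁ ∘ e, f₂,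
    fun hc => h1 (by simpa using congrArg e hc), h2, ?_, h4, ?_, h6, ?_, ?_, h9, h10,
    ?_, ?_, ?_, h14, ?_, ?_⟩
  · intro u
    show G₁.Adj (e (e.symm z₁)) (e u) ↔ _
    rw [Equiv.apply_symm_apply]
    rw [h3 (e u)]
    constructor
    · rintro (hu | hu)
      · left; rw [← hu, Equiv.symm_apply_apply]
      · right; rw [← hu, Equiv.symm_apply_apply]
    · rintro (rfl | rfl)
      · left; exact (Equiv.apply_symm_apply e x₁)
      · right; exact (Equiv.apply_symm_apply e y₁)
  · intro a ha b hb hab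
    apply e.injective
    refine h5 ?_ ?_ hab
    · exact fun hc => ha (by rw [← Equiv.symm_apply_apply e a, hc])
    · exact fun hc => hb (by rw [← Equiv.symm_apply_apply e b, hc])
  · show f₁ (e (e.symm x₁)) = j₁; rw [Equiv.apply_symm_apply]; exact h7
  · show f₁ (e (e.symm y₁)) = j₂; rw [Equiv.apply_symm_apply]; exact h8
  · intro v; rw [himg]; exact h11 v
  · rw [himg]; exact h12
  · intro u v hu hv huv
    show G.Adj _ _ ↔ G₁.Adj (e u) (e v)
    refine h13 (e u) (e v) ?_ ?_ ?_
    · exact fun hc => hu (by rw [← Equiv.symm_apply_apply e u, hc])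
    · exact fun hc => hv (by rw [← Equiv.symm_apply_apply e v, hc])
    · intro hc
      apply huv
      rw [Sym2.eq_iff] at hc ⊢
      rcases hc with ⟨rfl, rfl⟩ | ⟨rfl, rfl⟩
      · left; rw [Equiv.symm_apply_apply, Equiv.symm_apply_apply]; exact ⟨rfl, rfl⟩
      · right; rw [Equiv.symm_apply_apply, Equiv.symm_apply_apply]; exact ⟨rfl, rfl⟩
  · show G.Adj j₁ j₂ ↔ G₁.Adj (e (e.symm x₁)) (e (e.symm y₁)) ∨ _
    rw [Equiv.apply_symm_apply, Equiv.apply_symm_apply]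
    exact h15
  · intro a b hab
    rcases h16 a b hab with ⟨ha, hb⟩ | hb
    · left; rw [himg]; exact ⟨ha, hb⟩
    · right; exact hb
lemma sideG_image (U : Set V) (x : V) :
    (fun o : Option ↥U => o.elim x Subtype.val) '' {u | u ≠ none} = U := by
  ext v
  constructor
  · rintro ⟨(_ | u), hu, rfl⟩
    · exact absurd rfl hu
    · exact u.2
  · intro hv
    exact ⟨some ⟨v, hv⟩, by simp, rfl⟩

/-- the 2-sum structure -/
lemma isTwoSumOf_sideG (G : SimpleGraph V) {x y : V} (hadj : G.Adj x y) (A B : Set V)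
    (hW : A ∪ B = {v | v ≠ x ∧ v ≠ y}) (hdisj : Disjoint A B)
    (hcross : ∀ a ∈ A, ∀ b ∈ B, ¬ G.Adj a b) :
    IsTwoSumOf G (sideG G (insert x (insert y A)) x y)
      (sideG (G.deleteEdges {s(x,y)}) (insert x (insert y B)) x y) x y := by
  have hxy : x ≠ y := G.ne_of_adj hadj
  set UA := insert x (insert y A) with hUA
  set UB := insert x (insert y B) with hUB
  have hxUA : x ∈ UA := Set.mem_insert _ _
  have hyUA : y ∈ UA := Set.mem_insert_of_mem _ (Set.mem_insert _ _)
  have hxUB : x ∈ UB := Set.mem_insert _ _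
  have hyUB : y ∈ UB := Set.mem_insert_of_mem _ (Set.mem_insert _ _)
  have hAx : ∀ v ∈ A, v ≠ x ∧ v ≠ y := by
    intro v hv
    have : v ∈ A ∪ B := Or.inl hv
    rw [hW] at this; exact this
  have hBx : ∀ v ∈ B, v ≠ x ∧ v ≠ y := by
    intro v hv
    have : v ∈ A ∪ B := Or.inr hv
    rw [hW] at this; exact this
  refine ⟨none, some ⟨x, hxUA⟩, some ⟨y, hyUA⟩, none, some ⟨x, hxUB⟩, some ⟨y, hyUB⟩,
    (fun o => o.elim x Subtype.val), (fun o => o.elim x Subtype.val),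
    by simp [hxy], by simp [hxy], ?_, ?_, ?_, ?_, rfl, rfl, rfl, rfl, ?_, ?_, ?_, ?_, ?_, ?_⟩
  · rintro (_ | u)
    · show False ↔ _; simp
    · show (u : V) = x ∨ (u : V) = y ↔ _
      simp [Subtype.ext_iff]
  · rintro (_ | u)
    · show False ↔ _; simp
    · show (u : V) = x ∨ (u : V) = y ↔ _
      simp [Subtype.ext_iff]
  · rintro (_ | u) hu (_ | v) hv h
    · rfl
    · exact absurd rfl hu
    · exact absurd rfl hv
    · exact congrArg some (Subtype.ext h)
  · rintro (_ | u) hu (_ | v) hv h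
    · rfl
    · exact absurd rfl hu
    · exact absurd rfl hv
    · exact congrArg some (Subtype.ext h)
  · intro v
    rw [sideG_image, sideG_image]
    by_cases hvx : v = x
    · exact Or.inl (hvx ▸ hxUA)
    by_cases hvy : v = y
    · exact Or.inl (hvy ▸ hyUA)
    have : v ∈ A ∪ B := by rw [hW]; exact ⟨hvx, hvy⟩
    rcases this with h | h
    · exact Or.inl (Set.mem_insert_of_mem _ (Set.mem_insert_of_mem _ h))
    · exact Or.inr (Set.mem_insert_of_mem _ (Set.mem_insert_of_mem _ h))
  · rw [sideG_image, sideG_image]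
    ext v
    simp only [hUA, hUB, Set.mem_inter_iff, Set.mem_insert_iff, Set.mem_singleton_iff]
    constructor
    · rintro ⟨(rfl | rfl | hA), (h | h | hB)⟩
      · exact Or.inl rfl
      · exact Or.inl rfl
      · exact Or.inl rfl
      · exact Or.inr rfl
      · exact Or.inr rfl
      · exact Or.inr rfl
      · exact absurd h (hAx _ hA).1
      · exact absurd h (hAx _ hA).2
      · exact absurd hB (Set.disjoint_left.mp hdisj hA)
    · rintro (rfl | rfl)
      · exact ⟨Or.inl rfl, Or.inl rfl⟩
      · exact ⟨Or.inr (Or.inl rfl), Or.inr (Or.inl rfl)⟩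
  · rintro (_ | u) (_ | v) hu hv h
    · exact absurd rfl hu
    · exact absurd rfl hu
    · exact absurd rfl hv
    · exact Iff.rfl
  · rintro (_ | u) (_ | v) hu hv h
    · exact absurd rfl hu
    · exact absurd rfl hu
    · exact absurd rfl hv
    · show G.Adj ↑u ↑v ↔ (G.deleteEdges {s(x,y)}).Adj ↑u ↑v
      rw [deleteEdges_adj]
      refine ⟨fun ha => ⟨ha, ?_⟩, fun ha => ha.1⟩
      intro hm
      rw [Set.mem_singleton_iff, Sym2.eq_iff] at hm
      apply h
      rw [Sym2.eq_iff]
      rcases hm with ⟨h1, h2⟩ | ⟨h1, h2⟩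
      · exact Or.inl ⟨congrArg some (Subtype.ext h1), congrArg some (Subtype.ext h2)⟩
      · exact Or.inr ⟨congrArg some (Subtype.ext h1), congrArg some (Subtype.ext h2)⟩
  · exact ⟨fun h => Or.inl h, fun _ => hadj⟩
  · intro a b hab
    rw [sideG_image, sideG_image]
    have hmem : ∀ v, v ∈ UA ∨ v ∈ B := by
      intro v
      by_cases hvx : v = x
      · exact Or.inl (hvx ▸ hxUA)
      by_cases hvy : v = y
      · exact Or.inl (hvy ▸ hyUA)
      have : v ∈ A ∪ B := by rw [hW]; exact ⟨hvx, hvy⟩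
      rcases this with h | h
      · exact Or.inl (Set.mem_insert_of_mem _ (Set.mem_insert_of_mem _ h))
      · exact Or.inr h
    have hBUB : ∀ v ∈ B, v ∈ UB := fun v hv =>
      Set.mem_insert_of_mem _ (Set.mem_insert_of_mem _ hv)
    have hxyUB : ∀ v, v = x ∨ v = y → v ∈ UB := by
      rintro v (rfl | rfl) <;> [exact hxUB; exact hyUB]
    have hAnotB : ∀ v ∈ UA, G.Adj a b → True := fun _ _ _ => trivial
    rcases hmem a with ha | ha
    · rcases hmem b with hb | hb
      · exact Or.inl ⟨ha, hb⟩
      · -- b ∈ B, a ∈ UA; then a must be x or y (a ∈ A would contradict hcross)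
        right
        refine ⟨?_, hBUB b hb⟩
        rcases ha with rfl | rfl | hA
        · exact hxUB
        · exact hyUB
        · exact absurd hab (hcross _ hA _ hb)
    · rcases hmem b with hb | hb
      · right
        refine ⟨hBUB a ha, ?_⟩
        rcases hb with rfl | rfl | hA
        · exact hxUB
        · exact hyUB
        · exact absurd hab.symm (hcross _ hA _ ha)
      · exact Or.inr ⟨hBUB a ha, hBUB b hb⟩
lemma EB_eq (G : SimpleGraph V) {x y : V} (hadj : G.Adj x y) (A B : Set V)
    (hW : A ∪ B = {v | v ≠ x ∧ v ≠ y}) (hdisj : Disjoint A B)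
    (hcross : ∀ a ∈ A, ∀ b ∈ B, ¬ G.Adj a b) :
    G.edgeSet \ {e ∈ G.edgeSet | ∀ v ∈ e, v ∈ insert x (insert y A)}
      = {e ∈ (G.deleteEdges {s(x,y)}).edgeSet | ∀ v ∈ e, v ∈ insert x (insert y B)} := by
  set UA := insert x (insert y A) with hUAdef
  set UB := insert x (insert y B) with hUBdef
  have hBW : ∀ v ∈ B, v ≠ x ∧ v ≠ y := by
    intro v hv; have : v ∈ A ∪ B := Or.inr hv; rw [hW] at this; exact this
  have hAW : ∀ v ∈ A, v ≠ x ∧ v ≠ y := by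
    intro v hv; have : v ∈ A ∪ B := Or.inl hv; rw [hW] at this; exact this
  have hnotA : ∀ v, v ∉ UA → v ∈ B := by
    intro v hv
    simp only [hUAdef, Set.mem_insert_iff, not_or] at hv
    have : v ∈ A ∪ B := by rw [hW]; exact ⟨hv.1, hv.2.1⟩
    rcases this with h | h
    · exact absurd h hv.2.2
    · exact h
  have hBnotUA : ∀ v ∈ B, v ∉ UA := by
    intro v hv
    simp only [hUAdef, Set.mem_insert_iff, not_or]
    exact ⟨(hBW v hv).1, (hBW v hv).2, fun hA => Set.disjoint_left.mp hdisj hA hv⟩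
  -- key: an edge with one endpoint not in UA
  have key : ∀ a b, G.Adj a b → a ∉ UA →
      ((G.deleteEdges {s(x,y)}).Adj a b ∧ a ∈ UB ∧ b ∈ UB) := by
    intro a b hab ha
    have haB : a ∈ B := hnotA a ha
    have hbB : b ∉ A := fun hA => hcross b hA a haB hab.symm
    have hbUB : b ∈ UB := by
      by_cases hbx : b = x
      · exact hbx ▸ Set.mem_insert _ _
      by_cases hby : b = y
      · exact hby ▸ Set.mem_insert_of_mem _ (Set.mem_insert _ _)
      have : b ∈ A ∪ B := by rw [hW]; exact ⟨hbx, hby⟩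
      rcases this with h | h
      · exact absurd h hbB
      · exact Set.mem_insert_of_mem _ (Set.mem_insert_of_mem _ h)
    refine ⟨?_, Set.mem_insert_of_mem _ (Set.mem_insert_of_mem _ haB), hbUB⟩
    rw [deleteEdges_adj]
    refine ⟨hab, ?_⟩
    intro hm
    rw [Set.mem_singleton_iff, Sym2.eq_iff] at hm
    rcases hm with ⟨rfl, rfl⟩ | ⟨rfl, rfl⟩
    · exact (hBW a haB).1 rfl
    · exact (hBW a haB).2 rfl
  ext e
  induction e using Sym2.ind with
  | _ a b =>
    simp only [Set.mem_diff, Set.mem_setOf_eq, mem_edgeSet, not_and, not_forall]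
    constructor
    · rintro ⟨hab, hnotall⟩
      obtain ⟨v, hv, hvUA⟩ := hnotall hab
      rw [Sym2.mem_iff] at hv
      rcases hv with rfl | rfl
      · obtain ⟨hdel, h1, h2⟩ := key v b hab hvUA
        refine ⟨hdel, ?_⟩
        intro u hu
        rw [Sym2.mem_iff] at hu
        rcases hu with rfl | rfl <;> assumption
      · obtain ⟨hdel, h1, h2⟩ := key v a hab.symm hvUA
        refine ⟨hdel.symm, ?_⟩
        intro u hu
        rw [Sym2.mem_iff] at hu
        rcases hu with rfl | rfl
        · exact h2
        · exact h1
    · rintro ⟨hdel, hall⟩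
      rw [deleteEdges_adj] at hdel
      obtain ⟨hab, hne⟩ := hdel
      refine ⟨hab, fun _ => ?_⟩
      have haUB : a ∈ UB := hall a (by rw [Sym2.mem_iff]; left; rfl)
      have hbUB : b ∈ UB := hall b (by rw [Sym2.mem_iff]; right; rfl)
      -- one of a, b is in B
      have : a ∈ B ∨ b ∈ B := by
        simp only [hUBdef, Set.mem_insert_iff] at haUB hbUB
        rcases haUB with rfl | rfl | h
        · rcases hbUB with rfl | rfl | h
          · exact absurd rfl hab.ne
          · exact absurd (Set.mem_singleton _) hne
          · exact Or.inr h
        · rcases hbUB with rfl | rfl | h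
          · exact absurd (by rw [Sym2.eq_swap]; exact Set.mem_singleton _) hne
          · exact absurd rfl hab.ne
          · exact Or.inr h
        · exact Or.inl h
      rcases this with h | h
      · exact ⟨a, by rw [Sym2.mem_iff]; left; rfl, hBnotUA a h⟩
      · exact ⟨b, by rw [Sym2.mem_iff]; right; rfl, hBnotUA b h⟩
lemma edgeSet_ncard_comap {α β : Type} (e : α ≃ β) (G : SimpleGraph β) :
    (SimpleGraph.comap (⇑e) G).edgeSet.ncard = G.edgeSet.ncard := by
  rw [← Nat.card_coe_set_eq, ← Nat.card_coe_set_eq]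
  exact Nat.card_congr (Iso.comap e G).mapEdgeSet

lemma admissible_of_partition [Fintype V] (G : SimpleGraph V) {x y : V}
    (hadj : G.Adj x y) (A B : Set V)
    (hW : A ∪ B = {v | v ≠ x ∧ v ≠ y}) (hdisj : Disjoint A B)
    (hcross : ∀ a ∈ A, ∀ b ∈ B, ¬ G.Adj a b)
    (hEA : 3 ≤ {e ∈ G.edgeSet | ∀ v ∈ e, v ∈ insert x (insert y A)}.ncard)
    (hEB : 3 ≤ (G.edgeSet \ {e ∈ G.edgeSet | ∀ v ∈ e, v ∈ insert x (insert y A)}).ncard) :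
    AdmissibleTwoCut G x y := by
  classical
  set UA := insert x (insert y A) with hUAdef
  set UB := insert x (insert y B) with hUBdef
  have hxy := G.ne_of_adj hadj
  set EAs := {e ∈ G.edgeSet | ∀ v ∈ e, v ∈ UA} with hEAdef
  have hsub : EAs ⊆ G.edgeSet := fun e he => he.1
  have hsplit : (G.edgeSet \ EAs).ncard + EAs.ncard = G.edgeSet.ncard :=
    Set.ncard_diff_add_ncard_of_subset hsub (Set.toFinite _)
  have hG1 : (sideG G UA x y).edgeSet.ncard = EAs.ncard + 2 := by
    rw [sideG_ncard G UA (Set.mem_insert _ _) (Set.mem_insert_of_mem _ (Set.mem_insert _ _)) hxy,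
      induce_edgeSet_ncard]
  have hG2 : (sideG (G.deleteEdges {s(x,y)}) UB x y).edgeSet.ncard
      = (G.edgeSet \ EAs).ncard + 2 := by
    rw [sideG_ncard _ UB (Set.mem_insert _ _) (Set.mem_insert_of_mem _ (Set.mem_insert _ _)) hxy,
      induce_edgeSet_ncard, hEAdef, EB_eq G hadj A B hW hdisj hcross]
  have hsum := isTwoSumOf_sideG G hadj A B hW hdisj hcross
  let e₁ : Option ↥UA ≃ Fin (Nat.card (Option ↥UA)) := Finite.equivFin _
  let e₂ : Option ↥UB ≃ Fin (Nat.card (Option ↥UB)) := Finite.equivFin _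
  refine ⟨Nat.card (Option ↥UA), Nat.card (Option ↥UB),
    (sideG G UA x y).comap ⇑e₁.symm,
    (sideG (G.deleteEdges {s(x,y)}) UB x y).comap ⇑e₂.symm, ?_, ?_, ?_⟩
  · exact ((hsum.comap_left e₁.symm).swap.comap_left e₂.symm).swap
  · rw [edgeSet_ncard_comap]; omega
  · rw [edgeSet_ncard_comap]; omega
lemma reachable_exists_adj {X : Type*} {K : SimpleGraph X} {s t : X}
    (h : K.Reachable s t) (hne : s ≠ t) : ∃ w, K.Adj s w := by
  obtain ⟨p⟩ := h
  cases p with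
  | nil => exact absurd rfl hne
  | cons h q => exact ⟨_, h⟩

lemma three_le_ncard {X : Type*} {S : Set X} (hS : S.Finite) {e₁ e₂ e₃ : X}
    (h1 : e₁ ∈ S) (h2 : e₂ ∈ S) (h3 : e₃ ∈ S)
    (d12 : e₁ ≠ e₂) (d13 : e₁ ≠ e₃) (d23 : e₂ ≠ e₃) : 3 ≤ S.ncard := by
  have hsub : ({e₁, e₂, e₃} : Set X) ⊆ S := by
    rintro v (rfl | rfl | rfl) <;> assumption
  have : ({e₁, e₂, e₃} : Set X).ncard = 3 := Set.ncard_eq_three.mpr ⟨_, _, _, d12, d13, d23, rfl⟩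
  rw [← this]
  exact Set.ncard_le_ncard hsub hS

lemma exists_adj_into (G : SimpleGraph V) {x y : V} (A B : Set V)
    (hconn : (G.induce {u | u ≠ y}).Connected)
    (hW : A ∪ B = {v | v ≠ x ∧ v ≠ y}) (hdisj : Disjoint A B)
    (hcross : ∀ a ∈ A, ∀ b ∈ B, ¬G.Adj a b)
    {a b : V} (ha : a ∈ A) (hb : b ∈ B) :
    ∃ a' ∈ A, G.Adj x a' := by
  have haW : a ≠ x ∧ a ≠ y := by
    have : a ∈ A ∪ B := Or.inl ha; rwa [hW] at this
  have hbW : b ≠ x ∧ b ≠ y := by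
    have : b ∈ A ∪ B := Or.inr hb; rwa [hW] at this
  obtain ⟨p⟩ := hconn.preconnected ⟨a, haW.2⟩ ⟨b, hbW.2⟩
  set S : Set ↥{u : V | u ≠ y} := {v | (v : V) ∈ A} with hSdef
  obtain ⟨d, _, hfst, hsnd⟩ := p.exists_boundary_dart S
    (show a ∈ A from ha) (fun hc => Set.disjoint_left.mp hdisj hc hb)
  have hadj : G.Adj ↑d.fst ↑d.snd := d.adj
  by_cases hx : (d.snd : V) = x
  · exact ⟨d.fst, hfst, hx ▸ hadj.symm⟩
  · exfalso
    have : (d.snd : V) ∈ A ∪ B := by rw [hW]; exact ⟨hx, d.snd.2⟩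
    rcases this with h | h
    · exact hsnd h
    · exact hcross _ hfst _ h hadj

lemma three_le_EA [Finite V] (G : SimpleGraph V) {x y : V} (hadj : G.Adj x y) (S : Set V)
    (hSW : ∀ v ∈ S, v ≠ x ∧ v ≠ y)
    {bx byy : V} (hbx : bx ∈ S) (hbxadj : G.Adj x bx) (hby : byy ∈ S) (hbyadj : G.Adj y byy) :
    3 ≤ {e ∈ G.edgeSet | ∀ v ∈ e, v ∈ insert x (insert y S)}.ncard := by
  have hxy := G.ne_of_adj hadj
  apply three_le_ncard (Set.toFinite _) (e₁ := s(x,y)) (e₂ := s(x,bx)) (e₃ := s(y,byy))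
  · exact ⟨hadj, by
      intro v hv; rw [Sym2.mem_iff] at hv
      rcases hv with rfl | rfl
      · exact Set.mem_insert _ _
      · exact Set.mem_insert_of_mem _ (Set.mem_insert _ _)⟩
  · exact ⟨hbxadj, by
      intro v hv; rw [Sym2.mem_iff] at hv
      rcases hv with rfl | rfl
      · exact Set.mem_insert _ _
      · exact Set.mem_insert_of_mem _ (Set.mem_insert_of_mem _ hbx)⟩
  · exact ⟨hbyadj, by
      intro v hv; rw [Sym2.mem_iff] at hv
      rcases hv with rfl | rfl
      · exact Set.mem_insert_of_mem _ (Set.mem_insert _ _)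
      · exact Set.mem_insert_of_mem _ (Set.mem_insert_of_mem _ hby)⟩
  · rw [Ne, Sym2.eq_iff]
    rintro (⟨-, rfl⟩ | ⟨rfl, -⟩)
    · exact (hSW _ hbx).2 rfl
    · exact (hSW _ hbx).1 rfl
  · rw [Ne, Sym2.eq_iff]
    rintro (⟨rfl, -⟩ | ⟨rfl, -⟩)
    · exact hxy rfl
    · exact (hSW _ hby).1 rfl
  · rw [Ne, Sym2.eq_iff]
    rintro (⟨rfl, -⟩ | ⟨rfl, rfl⟩)
    · exact hxy rfl
    · exact (hSW _ hby).1 rfl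

lemma three_le_EB [Finite V] (G : SimpleGraph V) {x y : V} (hxy : x ≠ y) (S T : Set V)
    (hT : ∀ v ∈ T, v ∉ insert x (insert y S)) (hTW : ∀ v ∈ T, v ≠ x ∧ v ≠ y)
    {bx byy u w : V} (hbx : bx ∈ T) (hbxadj : G.Adj x bx) (hby : byy ∈ T) (hbyadj : G.Adj y byy)
    (hu : u ∈ T) (hw : w ∈ T) (huw : G.Adj u w) :
    3 ≤ (G.edgeSet \ {e ∈ G.edgeSet | ∀ v ∈ e, v ∈ insert x (insert y S)}).ncard := by
  apply three_le_ncard (Set.toFinite _) (e₁ := s(x,bx)) (e₂ := s(y,byy)) (e₃ := s(u,w))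
  · refine ⟨hbxadj, ?_⟩
    intro hall
    exact hT bx hbx (hall.2 bx (by rw [Sym2.mem_iff]; right; rfl))
  · refine ⟨hbyadj, ?_⟩
    intro hall
    exact hT byy hby (hall.2 byy (by rw [Sym2.mem_iff]; right; rfl))
  · refine ⟨huw, ?_⟩
    intro hall
    exact hT u hu (hall.2 u (by rw [Sym2.mem_iff]; left; rfl))
  · rw [Ne, Sym2.eq_iff]
    rintro (⟨rfl, -⟩ | ⟨rfl, rfl⟩)
    · exact hxy rfl
    · exact (hTW _ hby).1 rfl
  · rw [Ne, Sym2.eq_iff]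
    rintro (⟨rfl, -⟩ | ⟨rfl, -⟩)
    · exact (hTW _ hu).1 rfl
    · exact (hTW _ hw).1 rfl
  · rw [Ne, Sym2.eq_iff]
    rintro (⟨rfl, -⟩ | ⟨rfl, -⟩)
    · exact (hTW _ hu).2 rfl
    · exact (hTW _ hw).2 rfl

/-- If `G` is 2-connected, `x, y` are adjacent, `G - {x,y}` has exactly 2
components, and `{x,y}` is not an admissible 2-cut, then `G ≅ K₄` minus an edge. -/
theorem isoK4MinusEdge_of_not_admissible {V : Type} [Fintype V]
    (G : SimpleGraph V) (x y : V) (hadj : G.Adj x y)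
    (h2 : TwoConnected G)
    (hc : Nat.card ((G.induce {v : V | v ≠ x ∧ v ≠ y}).ConnectedComponent) = 2)
    (hna : ¬ AdmissibleTwoCut G x y) :
    Nonempty (G ≃g (⊤ : SimpleGraph (Fin 4)).deleteEdges {s((0 : Fin 4), (1 : Fin 4))}) := by
  classical
  obtain ⟨-, hconn⟩ := h2
  have hxy : x ≠ y := G.ne_of_adj hadj
  set W : Set V := {v : V | v ≠ x ∧ v ≠ y} with hWdef
  set H : SimpleGraph ↥W := G.induce W with hHdef
  obtain ⟨c₁, c₂, hc12, hcuniv⟩ := Nat.card_eq_two_iff.mp hc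
  set A : Set V := {v : V | ∃ h : v ∈ W, H.connectedComponentMk ⟨v, h⟩ = c₁} with hAdef
  set B : Set V := {v : V | ∃ h : v ∈ W, H.connectedComponentMk ⟨v, h⟩ = c₂} with hBdef
  have hWun : A ∪ B = W := by
    ext v
    constructor
    · rintro (⟨h, -⟩ | ⟨h, -⟩) <;> exact h
    · intro hv
      have : H.connectedComponentMk ⟨v, hv⟩ ∈ ({c₁, c₂} : Set _) := by
        rw [hcuniv]; trivial
      rcases this with h | h
      · exact Or.inl ⟨hv, h⟩
      · exact Or.inr ⟨hv, h⟩
  have hdisj : Disjoint A B := by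
    rw [Set.disjoint_left]
    rintro v ⟨h1, e1⟩ ⟨h2, e2⟩
    exact hc12 (e1.symm.trans e2)
  have hcompadj : ∀ {u v : V} (hu : u ∈ W) (hv : v ∈ W), G.Adj u v →
      H.connectedComponentMk ⟨u, hu⟩ = H.connectedComponentMk ⟨v, hv⟩ := by
    intro u v hu hv huv
    exact ConnectedComponent.sound (SimpleGraph.Adj.reachable
      (show H.Adj ⟨u, hu⟩ ⟨v, hv⟩ from huv))
  have hcross : ∀ a ∈ A, ∀ b ∈ B, ¬G.Adj a b := by
    rintro a ⟨ha, ea⟩ b ⟨hb, eb⟩ hab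
    exact hc12 (ea.symm.trans ((hcompadj ha hb hab).trans eb))
  have hcross' : ∀ b ∈ B, ∀ a ∈ A, ¬G.Adj b a := by
    intro b hb a ha h
    exact hcross a ha b hb h.symm
  obtain ⟨va, hva⟩ := Quot.exists_rep c₁
  obtain ⟨vb, hvb⟩ := Quot.exists_rep c₂
  have haA : (va : V) ∈ A := ⟨va.2, by rw [Subtype.coe_eta]; exact hva⟩
  have hbB : (vb : V) ∈ B := ⟨vb.2, by rw [Subtype.coe_eta]; exact hvb⟩
  -- x, y are adjacent into both A and B
  have hWswap : B ∪ A = {v | v ≠ x ∧ v ≠ y} := by rw [Set.union_comm]; exact hWun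
  have hWyx : A ∪ B = {v | v ≠ y ∧ v ≠ x} := by
    rw [hWun]; ext v; exact and_comm
  have hWyx' : B ∪ A = {v | v ≠ y ∧ v ≠ x} := by rw [Set.union_comm]; exact hWyx
  have hxA : ∃ a' ∈ A, G.Adj x a' :=
    exists_adj_into G A B (hconn y) hWun hdisj hcross haA hbB
  have hxB : ∃ b' ∈ B, G.Adj x b' :=
    exists_adj_into G B A (hconn y) hWswap hdisj.symm hcross' hbB haA
  have hyA : ∃ a' ∈ A, G.Adj y a' :=
    exists_adj_into G A B (hconn x) hWyx hdisj hcross haA hbB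
  have hyB : ∃ b' ∈ B, G.Adj y b' :=
    exists_adj_into G B A (hconn x) hWyx' hdisj.symm hcross' hbB haA
  -- vertices of A (resp B) are in W
  have hAW : ∀ v ∈ A, v ≠ x ∧ v ≠ y := by
    intro v hv; have : v ∈ A ∪ B := Or.inl hv; rwa [hWun] at this
  have hBW : ∀ v ∈ B, v ≠ x ∧ v ≠ y := by
    intro v hv; have : v ∈ B := hv
    have : v ∈ A ∪ B := Or.inr hv; rwa [hWun] at this
  -- internal edge of a component with at least two vertices
  have hinternal : ∀ (c : H.ConnectedComponent) (a' a'' : V) (h1 : a' ∈ W) (h2 : a'' ∈ W),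
      H.connectedComponentMk ⟨a', h1⟩ = c → H.connectedComponentMk ⟨a'', h2⟩ = c →
      a' ≠ a'' → ∃ u w, (∃ hu : u ∈ W, H.connectedComponentMk ⟨u, hu⟩ = c) ∧
        (∃ hw : w ∈ W, H.connectedComponentMk ⟨w, hw⟩ = c) ∧ G.Adj u w := by
    intro c a' a'' h1 h2 e1 e2 hne
    have hr : H.Reachable ⟨a', h1⟩ ⟨a'', h2⟩ :=
      ConnectedComponent.exact (e1.trans e2.symm)
    obtain ⟨w2, hw2⟩ := reachable_exists_adj hr (fun h => hne (congrArg Subtype.val h))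
    have hGadj : G.Adj a' ↑w2 := hw2
    have hcomp : H.connectedComponentMk w2 = c := by
      rw [← e1]
      exact (ConnectedComponent.sound hw2.reachable).symm
    exact ⟨a', ↑w2, ⟨h1, e1⟩, ⟨w2.2, by rw [Subtype.coe_eta]; exact hcomp⟩, hGadj⟩
  -- rule out components with ≥ 2 vertices
  have hnotwo : ∀ S T : Set V, S ∪ T = W → Disjoint S T →
      (∀ a ∈ S, ∀ b ∈ T, ¬G.Adj a b) →
      (∃ sx ∈ S, G.Adj x sx) → (∃ sy ∈ S, G.Adj y sy) →
      (∃ tx ∈ T, G.Adj x tx) → (∃ ty ∈ T, G.Adj y ty) →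
      (∃ u w, u ∈ T ∧ w ∈ T ∧ G.Adj u w) → False := by
    rintro S T hun hdis hcr ⟨sx, hsx, hsxadj⟩ ⟨sy, hsy, hsyadj⟩ ⟨tx, htx, htxadj⟩
      ⟨ty, hty, htyadj⟩ ⟨u, w, hu, hw, huw⟩
    apply hna
    have hSW : ∀ v ∈ S, v ≠ x ∧ v ≠ y := by
      intro v hv; have : v ∈ S ∪ T := Or.inl hv; rwa [hun] at this
    have hTW : ∀ v ∈ T, v ≠ x ∧ v ≠ y := by
      intro v hv; have : v ∈ S ∪ T := Or.inr hv; rwa [hun] at this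
    have hTus : ∀ v ∈ T, v ∉ insert x (insert y S) := by
      intro v hv
      simp only [Set.mem_insert_iff, not_or]
      exact ⟨(hTW v hv).1, (hTW v hv).2, fun hS => Set.disjoint_left.mp hdis hS hv⟩
    exact admissible_of_partition G hadj S T hun hdis hcr
      (three_le_EA G hadj S hSW hsx hsxadj hsy hsyadj)
      (three_le_EB G hxy S T hTus hTW htx htxadj hty htyadj hu hw huw)
  -- both components are singletons
  have hA1 : ∀ a' ∈ A, a' = (va : V) := by
    by_contra hcon
    push_neg at hcon
    obtain ⟨a', ha', hne⟩ := hcon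
    obtain ⟨ha'W, ha'c⟩ := ha'
    obtain ⟨u, w, hu, hw, huw⟩ := hinternal c₁ a' (va : V) ha'W va.2 ha'c
      (by rw [Subtype.coe_eta]; exact hva) hne
    exact hnotwo B A hWswap hdisj.symm hcross' hxB hyB hxA hyA ⟨u, w, hu, hw, huw⟩
  have hB1 : ∀ b' ∈ B, b' = (vb : V) := by
    by_contra hcon
    push_neg at hcon
    obtain ⟨b', hb', hne⟩ := hcon
    obtain ⟨hb'W, hb'c⟩ := hb'
    obtain ⟨u, w, hu, hw, huw⟩ := hinternal c₂ b' (vb : V) hb'W vb.2 hb'c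
      (by rw [Subtype.coe_eta]; exact hvb) hne
    exact hnotwo A B hWun hdisj hcross hxA hyA hxB hyB ⟨u, w, hu, hw, huw⟩
  -- the four vertices
  set a : V := (va : V)
  set b : V := (vb : V)
  have hab : a ≠ b := fun h => Set.disjoint_left.mp hdisj haA (h ▸ hbB)
  have haxy : a ≠ x ∧ a ≠ y := hAW a haA
  have hbxy : b ≠ x ∧ b ≠ y := hBW b hbB
  have hax : G.Adj x a := by obtain ⟨a', ha', h⟩ := hxA; rwa [hA1 a' ha'] at h
  have hay : G.Adj y a := by obtain ⟨a', ha', h⟩ := hyA; rwa [hA1 a' ha'] at h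
  have hbx : G.Adj x b := by obtain ⟨b', hb', h⟩ := hxB; rwa [hB1 b' hb'] at h
  have hby : G.Adj y b := by obtain ⟨b', hb', h⟩ := hyB; rwa [hB1 b' hb'] at h
  have hGab : ¬ G.Adj a b := hcross a haA b hbB
  have hGba : ¬ G.Adj b a := fun h => hGab h.symm
  have h4 : ∀ v : V, v = a ∨ v = b ∨ v = x ∨ v = y := by
    intro v
    by_cases hvx : v = x
    · exact Or.inr (Or.inr (Or.inl hvx))
    by_cases hvy : v = y
    · exact Or.inr (Or.inr (Or.inr hvy))
    have : v ∈ A ∪ B := by rw [hWun]; exact ⟨hvx, hvy⟩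
    rcases this with h | h
    · exact Or.inl (hA1 v h)
    · exact Or.inr (Or.inl (hB1 v h))
  -- construct the isomorphism
  refine ⟨⟨⟨fun v => if v = a then 0 else if v = b then 1 else if v = x then 2 else 3,
    ![a, b, x, y], ?_, ?_⟩, ?_⟩⟩
  · intro v
    rcases h4 v with rfl | rfl | rfl | rfl <;>
      simp [hab, haxy.1, haxy.2, hbxy.1, hbxy.2, hxy, Ne.symm hab, Ne.symm haxy.1,
        Ne.symm haxy.2, Ne.symm hbxy.1, Ne.symm hbxy.2, Ne.symm hxy]
  · intro i
    fin_cases i <;>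
      simp [hab, haxy.1, haxy.2, hbxy.1, hbxy.2, hxy, Ne.symm hab, Ne.symm haxy.1,
        Ne.symm haxy.2, Ne.symm hbxy.1, Ne.symm hbxy.2, Ne.symm hxy]
  · intro u v
    rcases h4 u with rfl | rfl | rfl | rfl <;> rcases h4 v with rfl | rfl | rfl | rfl <;>
      simp [hab, haxy.1, haxy.2, hbxy.1, hbxy.2, hxy, Ne.symm hab, Ne.symm haxy.1,
        Ne.symm haxy.2, Ne.symm hbxy.1, Ne.symm hbxy.2, Ne.symm hxy,
        deleteEdges_adj, top_adj, Sym2.eq_iff, G.irrefl, hGab, hax, hay, hbx, hby,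
        hax.symm, hay.symm, hbx.symm, hby.symm, hadj, hadj.symm, hGba] <;> decide
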